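/- In a unital strict C*-alloy (A, ℂ², X), there exists a constant K > 0 such that for all a ∈ A: ‖ap‖ ≥ K‖a‖, ‖aq‖ ≥ K‖a‖, ‖E(a*a)‖ ≥ K²‖a‖², and ‖F(a*a)‖ ≥ K²‖a‖². -/

import Mathlib

open TensorProduct

/-- The linear map `A ⊗[R] B → X`, `a ⊗ b ↦ i a * j b`. -/
noncomputable def blendMul (R : Type*) {A B X : Type*} [CommRing R] [Ring A] [Ring B] [Ring X]
    [Algebra R A] [Algebra R B] [Algebra R X] (i : A →ₐ[R] X) (j : B →ₐ[R] X) :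
    A ⊗[R] B →ₗ[R] X :=
  (LinearMap.mul' R X).comp (TensorProduct.map i.toLinearMap j.toLinearMap)

section Aux

variable {A X : Type*}
    [NormedRing A] [StarRing A] [CStarRing A] [NormedAlgebra ℂ A] [CompleteSpace A]
    [StarModule ℂ A]
    [NormedRing X] [StarRing X] [CStarRing X] [NormedAlgebra ℂ X] [CompleteSpace X]
    [StarModule ℂ X]

/-- Lower bound for `a ↦ i a * p` via the open mapping theorem. -/
lemma aux_bound (i : A →⋆ₐ[ℂ] X) (hi : Function.Injective i) (p q : X)
    (hpq : p * q = 0)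
    (hinj : ∀ a : A, i a * p = 0 → a = 0)
    (hdec : ∀ c : X, c * q = 0 → ∃ a : A, c = i a * p) :
    ∃ C > (0 : ℝ), ∀ a : A, C * ‖a‖ ≤ ‖i a * p‖ := by
  letI : CStarAlgebra A := {}
  letI : CStarAlgebra X := {}
  have hnorm : ∀ a : A, ‖i a‖ = ‖a‖ := fun a => NonUnitalStarAlgHom.norm_map i hi a
  set g : X →L[ℂ] X := (ContinuousLinearMap.mul ℂ X).flip q with hg
  have hgapp : ∀ x : X, g x = x * q := fun x => rfl
  set N : Submodule ℂ X := LinearMap.ker (g : X →ₗ[ℂ] X) with hN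
  have hmem : ∀ a : A, i a * p ∈ N := by
    intro a
    simp only [hN, LinearMap.mem_ker, ContinuousLinearMap.coe_coe, hgapp, mul_assoc, hpq,
      mul_zero]
  let Tlin : A →ₗ[ℂ] N :=
    { toFun := fun a => ⟨i a * p, hmem a⟩
      map_add' := by intro a b; ext; simp [add_mul]
      map_smul' := by intro c a; ext; simp [smul_mul_assoc] }
  have hTbound : ∀ a : A, ‖Tlin a‖ ≤ ‖p‖ * ‖a‖ := by
    intro a
    have : ‖Tlin a‖ = ‖i a * p‖ := rfl
    rw [this]
    calc ‖i a * p‖ ≤ ‖i a‖ * ‖p‖ := norm_mul_le _ _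
      _ = ‖p‖ * ‖a‖ := by rw [hnorm]; ring
  let T : A →L[ℂ] N := LinearMap.mkContinuous Tlin ‖p‖ hTbound
  have hsurj : Function.Surjective T := by
    rintro ⟨y, hy⟩
    obtain ⟨a, ha⟩ := hdec y (by simpa [hN, hgapp] using hy)
    exact ⟨a, Subtype.ext ha.symm⟩
  obtain ⟨C, hC, hCle⟩ := ContinuousLinearMap.exists_preimage_norm_le T hsurj
  refine ⟨C⁻¹, inv_pos.mpr hC, fun a => ?_⟩
  obtain ⟨x, hx, hxle⟩ := hCle (T a)
  have hxa : x = a := by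
    have hval : i x * p = i a * p := congrArg Subtype.val hx
    have h0 : i (x - a) * p = 0 := by rw [map_sub, sub_mul, hval, sub_self]
    exact sub_eq_zero.mp (hinj _ h0)
  have hTa : ‖T a‖ = ‖i a * p‖ := rfl
  rw [hxa, hTa] at hxle
  rw [inv_mul_le_iff₀ hC]
  exact hxle

end Aux

theorem stmt17 {A X : Type*}
    [NormedRing A] [StarRing A] [CStarRing A] [NormedAlgebra ℂ A] [CompleteSpace A]
    [StarModule ℂ A]
    [NormedRing X] [StarRing X] [CStarRing X] [NormedAlgebra ℂ X] [CompleteSpace X]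
    [StarModule ℂ X]
    (i : A →⋆ₐ[ℂ] X) (hi : Function.Injective i) (j : (ℂ × ℂ) →ₐ[ℂ] X)
    (h1 : Function.Bijective (blendMul ℂ i.toAlgHom j))
    (h2 : Function.Bijective (blendMul ℂ j i.toAlgHom))
    (p q : X) (hp : p = j (1, 0)) (hq : q = j (0, 1))
    (hps : star p = p) (hqs : star q = q)
    (E F : A →ₗ[ℂ] A)
    (hE : ∀ a : A, p * i a * p = i (E a) * p)
    (hF : ∀ a : A, q * i a * q = i (F a) * q) :
    ∃ K > (0 : ℝ), ∀ a : A,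
      K * ‖a‖ ≤ ‖i a * p‖ ∧ K * ‖a‖ ≤ ‖i a * q‖ ∧
      K ^ 2 * ‖a‖ ^ 2 ≤ ‖E (star a * a)‖ ∧ K ^ 2 * ‖a‖ ^ 2 ≤ ‖F (star a * a)‖ := by
  letI : CStarAlgebra A := {}
  letI : CStarAlgebra X := {}
  have hnorm : ∀ a : A, ‖i a‖ = ‖a‖ := fun a => NonUnitalStarAlgHom.norm_map i hi a
  -- algebraic facts about p and q
  have hpq : p * q = 0 := by
    rw [hp, hq, ← map_mul]
    have : ((1, 0) : ℂ × ℂ) * (0, 1) = 0 := by ext <;> simp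
    rw [this, map_zero]
  have hqp : q * p = 0 := by
    rw [hp, hq, ← map_mul]
    have : ((0, 1) : ℂ × ℂ) * (1, 0) = 0 := by ext <;> simp
    rw [this, map_zero]
  have hpp : p * p = p := by
    rw [hp, ← map_mul]
    have : ((1, 0) : ℂ × ℂ) * (1, 0) = (1, 0) := by ext <;> simp
    rw [this]
  have hqq : q * q = q := by
    rw [hq, ← map_mul]
    have : ((0, 1) : ℂ × ℂ) * (0, 1) = (0, 1) := by ext <;> simp
    rw [this]
  have hpnorm : ‖p‖ ≤ 1 := by
    have h1 : ‖star p * p‖ = ‖p‖ * ‖p‖ := CStarRing.norm_star_mul_self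
    rw [hps, hpp] at h1
    nlinarith [norm_nonneg p]
  have hqnorm : ‖q‖ ≤ 1 := by
    have h1 : ‖star q * q‖ = ‖q‖ * ‖q‖ := CStarRing.norm_star_mul_self
    rw [hqs, hqq] at h1
    nlinarith [norm_nonneg q]
  -- tensor projections
  let P1 : A ⊗[ℂ] (ℂ × ℂ) →ₗ[ℂ] A :=
    TensorProduct.lift (((LinearMap.lsmul ℂ A).comp (LinearMap.fst ℂ ℂ ℂ)).flip)
  let P2 : A ⊗[ℂ] (ℂ × ℂ) →ₗ[ℂ] A :=
    TensorProduct.lift (((LinearMap.lsmul ℂ A).comp (LinearMap.snd ℂ ℂ ℂ)).flip)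
  have hP1 : ∀ (a : A) (b : ℂ × ℂ), P1 (a ⊗ₜ b) = b.1 • a := fun a b => rfl
  have hP2 : ∀ (a : A) (b : ℂ × ℂ), P2 (a ⊗ₜ b) = b.2 • a := fun a b => rfl
  have hblend : ∀ (a : A) (b : ℂ × ℂ),
      blendMul ℂ i.toAlgHom j (a ⊗ₜ b) = i a * j b := fun a b => rfl
  have hjb : ∀ b : ℂ × ℂ, j b = b.1 • p + b.2 • q := by
    intro b
    have hb : b = b.1 • ((1, 0) : ℂ × ℂ) + b.2 • ((0, 1) : ℂ × ℂ) := by ext <;> simp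
    rw [hp, hq]
    conv_lhs => rw [hb]
    rw [map_add, map_smul, map_smul]
  -- decomposition of blendMul
  have hdecomp : ∀ t : A ⊗[ℂ] (ℂ × ℂ),
      blendMul ℂ i.toAlgHom j t = i (P1 t) * p + i (P2 t) * q := by
    intro t
    induction t using TensorProduct.induction_on with
    | zero => simp
    | tmul a b =>
      rw [hblend, hP1, hP2, hjb b, mul_add, map_smul, map_smul, mul_smul_comm, mul_smul_comm,
        smul_mul_assoc, smul_mul_assoc]
    | add x y hx hy => simp [map_add, hx, hy, add_mul]; abel
  -- injectivity facts
  have hinj_p : ∀ a : A, i a * p = 0 → a = 0 := by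
    intro a ha
    have h0 : blendMul ℂ i.toAlgHom j (a ⊗ₜ ((1, 0) : ℂ × ℂ)) = blendMul ℂ i.toAlgHom j 0 := by
      rw [hblend, ← hp, ha, map_zero]
    have ht := h1.injective h0
    have := congrArg P1 ht
    rw [hP1] at this
    simpa using this
  have hinj_q : ∀ a : A, i a * q = 0 → a = 0 := by
    intro a ha
    have h0 : blendMul ℂ i.toAlgHom j (a ⊗ₜ ((0, 1) : ℂ × ℂ)) = blendMul ℂ i.toAlgHom j 0 := by
      rw [hblend, ← hq, ha, map_zero]
    have ht := h1.injective h0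
    have := congrArg P2 ht
    rw [hP2] at this
    simpa using this
  -- decomposition facts
  have hdec_p : ∀ c : X, c * q = 0 → ∃ a : A, c = i a * p := by
    intro c hc
    obtain ⟨t, ht⟩ := h1.surjective c
    have hct : c = i (P1 t) * p + i (P2 t) * q := by rw [← ht, hdecomp]
    have h2q : i (P2 t) * q = 0 := by
      have : c * q = i (P2 t) * q := by
        rw [hct, add_mul, mul_assoc, mul_assoc, hpq, hqq, mul_zero, zero_add]
      rw [← this, hc]
    have : P2 t = 0 := hinj_q _ h2q
    exact ⟨P1 t, by rw [hct, this, map_zero, zero_mul, add_zero]⟩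
  have hdec_q : ∀ c : X, c * p = 0 → ∃ a : A, c = i a * q := by
    intro c hc
    obtain ⟨t, ht⟩ := h1.surjective c
    have hct : c = i (P1 t) * p + i (P2 t) * q := by rw [← ht, hdecomp]
    have h1p : i (P1 t) * p = 0 := by
      have : c * p = i (P1 t) * p := by
        rw [hct, add_mul, mul_assoc, mul_assoc, hpp, hqp, mul_zero, add_zero]
      rw [← this, hc]
    have : P1 t = 0 := hinj_p _ h1p
    exact ⟨P2 t, by rw [hct, this, map_zero, zero_mul, zero_add]⟩
  obtain ⟨C1, hC1, hC1le⟩ := aux_bound i hi p q hpq hinj_p hdec_p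
  obtain ⟨C2, hC2, hC2le⟩ := aux_bound i hi q p hqp hinj_q hdec_q
  refine ⟨min C1 C2, lt_min hC1 hC2, fun a => ?_⟩
  have hK1 : min C1 C2 * ‖a‖ ≤ ‖i a * p‖ :=
    le_trans (mul_le_mul_of_nonneg_right (min_le_left _ _) (norm_nonneg a)) (hC1le a)
  have hK2 : min C1 C2 * ‖a‖ ≤ ‖i a * q‖ :=
    le_trans (mul_le_mul_of_nonneg_right (min_le_right _ _) (norm_nonneg a)) (hC2le a)
  have hKnn : 0 ≤ min C1 C2 * ‖a‖ :=
    mul_nonneg (le_of_lt (lt_min hC1 hC2)) (norm_nonneg a)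
  have hEbound : ‖i a * p‖ ^ 2 ≤ ‖E (star a * a)‖ := by
    have hstar : star (i a * p) = p * i (star a) := by rw [star_mul, hps, map_star]
    have hcs : ‖star (i a * p) * (i a * p)‖ = ‖i a * p‖ * ‖i a * p‖ :=
      CStarRing.norm_star_mul_self
    have hmul : star (i a * p) * (i a * p) = i (E (star a * a)) * p := by
      rw [hstar, ← hE (star a * a), map_mul]
      noncomm_ring
    rw [hmul] at hcs
    calc ‖i a * p‖ ^ 2 = ‖i (E (star a * a)) * p‖ := by rw [hcs]; ring
      _ ≤ ‖i (E (star a * a))‖ * ‖p‖ := norm_mul_le _ _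
      _ ≤ ‖E (star a * a)‖ * 1 := by
          rw [hnorm]
          exact mul_le_mul_of_nonneg_left hpnorm (norm_nonneg _)
      _ = ‖E (star a * a)‖ := mul_one _
  have hFbound : ‖i a * q‖ ^ 2 ≤ ‖F (star a * a)‖ := by
    have hstar : star (i a * q) = q * i (star a) := by rw [star_mul, hqs, map_star]
    have hcs : ‖star (i a * q) * (i a * q)‖ = ‖i a * q‖ * ‖i a * q‖ :=
      CStarRing.norm_star_mul_self
    have hmul : star (i a * q) * (i a * q) = i (F (star a * a)) * q := by
      rw [hstar, ← hF (star a * a), map_mul]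
      noncomm_ring
    rw [hmul] at hcs
    calc ‖i a * q‖ ^ 2 = ‖i (F (star a * a)) * q‖ := by rw [hcs]; ring
      _ ≤ ‖i (F (star a * a))‖ * ‖q‖ := norm_mul_le _ _
      _ ≤ ‖F (star a * a)‖ * 1 := by
          rw [hnorm]
          exact mul_le_mul_of_nonneg_left hqnorm (norm_nonneg _)
      _ = ‖F (star a * a)‖ := mul_one _
  refine ⟨hK1, hK2, ?_, ?_⟩
  · calc min C1 C2 ^ 2 * ‖a‖ ^ 2 = (min C1 C2 * ‖a‖) ^ 2 := by ring
      _ ≤ ‖i a * p‖ ^ 2 := pow_le_pow_left₀ hKnn hK1 2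
      _ ≤ ‖E (star a * a)‖ := hEbound
  · calc min C1 C2 ^ 2 * ‖a‖ ^ 2 = (min C1 C2 * ‖a‖) ^ 2 := by ring
      _ ≤ ‖i a * q‖ ^ 2 := pow_le_pow_left₀ hKnn hK2 2
      _ ≤ ‖F (star a * a)‖ := hFbound
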